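/- arXiv:0902.2795 — 2 statements merged into one kernel-verified Lean document; each statement's English description precedes it below -/
import Mathlib

section
/- Let G=(V,E) be an undirected graph, T ⊆ V a set of terminals, and pq an edge of G with p,q ∈ V∖T. Then there is no pair of terminals u,v ∈ T for which both the deletion and the contraction of pq strictly decrease the element-connectivity; that is, it cannot hold simultaneously that κ'_{G−pq}(u,v) = κ'_G(u,v) − 1 and κ'_{G/pq}(u,v) = κ'_G(u,v) − 1. -/
open SimpleGraph

/-- Two walks between the same pair of vertices are *element-disjoint* with respect to a
terminal set `T` if they share no edges and every common vertex is a terminal or an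
endpoint. -/
def ElemDisjWalks {V : Type*} (T : Set V) {G : SimpleGraph V} {u v : V}
    (W₁ W₂ : G.Walk u v) : Prop :=
  (∀ e, e ∈ W₁.edges → e ∉ W₂.edges) ∧
  (∀ x, x ∈ W₁.support → x ∈ W₂.support → x ∈ T ∪ {u, v})

/-- There exist `k` pairwise element-disjoint `u`-`v` paths in `G`
(with respect to the terminal set `T`). -/
def HasElemPaths {V : Type*} (G : SimpleGraph V) (T : Set V) (u v : V) (k : ℕ) : Prop :=
  ∃ P : Fin k → G.Walk u v, (∀ i, (P i).IsPath) ∧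
    ∀ i j, i ≠ j → ElemDisjWalks T (P i) (P j)

/-- The element-connectivity `κ'_G(u,v)`: the maximum number of `u`-`v` paths that are
pairwise disjoint in edges and in non-terminal vertices. -/
noncomputable def elemConn {V : Type*} (G : SimpleGraph V) (T : Set V) (u v : V) : ℕ :=
  sSup {k | HasElemPaths G T u v k}

/-- The graph `G/pq` obtained from `G` by contracting the edge `pq`: the merged vertex
is `p`, and `q` becomes an isolated vertex (so the vertex set is unchanged). -/
def contractEdge {V : Type*} [DecidableEq V] (G : SimpleGraph V) (p q : V) :
    SimpleGraph V :=
  SimpleGraph.fromRel (fun a b =>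
    ∃ x y, G.Adj x y ∧ (if x = q then p else x) = a ∧ (if y = q then p else y) = b)

lemma exists_contract_walk {V : Type*} [DecidableEq V] (G : SimpleGraph V) (p q : V) :
    ∀ {a b : V} (W : G.Walk a b),
      ∃ W' : (contractEdge G p q).Walk (if a = q then p else a) (if b = q then p else b),
        (∀ x ∈ W'.support, ∃ y ∈ W.support, (if y = q then p else y) = x) ∧
        (∀ e ∈ W'.edges, ∃ x y, s(x, y) ∈ W.edges ∧
          e = s(if x = q then p else x, if y = q then p else y)) := by
  intro a b W
  induction W with
  | nil => exact ⟨Walk.nil, by simp, by simp⟩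
  | @cons a c b h w ih =>
    obtain ⟨W', hsup, hedg⟩ := ih
    by_cases hc : (if a = q then p else a) = (if c = q then p else c)
    · refine ⟨W'.copy hc.symm rfl, ?_, ?_⟩
      · intro x hx
        rw [Walk.support_copy] at hx
        obtain ⟨y, hy, hfy⟩ := hsup x hx
        exact ⟨y, by simp [Walk.support_cons, hy], hfy⟩
      · intro e he
        rw [Walk.edges_copy] at he
        obtain ⟨x, y, hxy, hfe⟩ := hedg e he
        exact ⟨x, y, by simp [Walk.edges_cons, hxy], hfe⟩
    · refine ⟨Walk.cons ?_ W', ?_, ?_⟩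
      · rw [contractEdge, SimpleGraph.fromRel_adj]
        exact ⟨hc, Or.inl ⟨a, c, h, rfl, rfl⟩⟩
      · intro x hx
        rw [Walk.support_cons] at hx
        rcases List.mem_cons.mp hx with hx | hx
        · exact ⟨a, by simp [Walk.support_cons], hx.symm⟩
        · obtain ⟨y, hy, hfy⟩ := hsup x hx
          exact ⟨y, by simp [Walk.support_cons, hy], hfy⟩
      · intro e he
        rw [Walk.edges_cons] at he
        rcases List.mem_cons.mp he with he | he
        · exact ⟨a, c, by simp [Walk.edges_cons], he⟩
        · obtain ⟨x, y, hxy, hfe⟩ := hedg e he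
          exact ⟨x, y, by simp [Walk.edges_cons, hxy], hfe⟩

lemma bddAbove_hasElemPaths {V : Type*} [Fintype V] [DecidableEq V]
    (G : SimpleGraph V) (T : Set V) (u v : V) (huv : u ≠ v) :
    BddAbove {k | HasElemPaths G T u v k} := by
  refine ⟨Fintype.card (Sym2 V), ?_⟩
  rintro k ⟨P, hP, hD⟩
  have hne : ∀ i, (P i).edges ≠ [] := by
    intro i h
    have hlen : (P i).length = 0 := by rw [← Walk.length_edges, h]; rfl
    exact huv (Walk.eq_of_length_eq_zero hlen)
  have hinj : Function.Injective (fun i => (P i).edges.head (hne i)) := by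
    intro i j hij
    have hij2 : (P i).edges.head (hne i) = (P j).edges.head (hne j) := hij
    by_contra hij'
    exact (hD i j hij').1 _ (List.head_mem _) (by rw [hij2]; exact List.head_mem _)
  calc k = Fintype.card (Fin k) := (Fintype.card_fin k).symm
    _ ≤ Fintype.card (Sym2 V) := Fintype.card_le_of_injective _ hinj

lemma hasElemPaths_zero {V : Type*} (G : SimpleGraph V) (T : Set V) (u v : V) :
    HasElemPaths G T u v 0 :=
  ⟨Fin.elim0, fun i => i.elim0, fun i _ _ => i.elim0⟩

/-- For an edge `pq` between non-terminals, there is no pair of terminals whose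
element-connectivity is strictly decreased both by deleting `pq` and by
contracting `pq`. -/
theorem no_pair_decreases_for_both {V : Type*} [Fintype V] [DecidableEq V]
    (G : SimpleGraph V) (T : Set V) (p q : V)
    (hp : p ∉ T) (hq : q ∉ T) (hpq : G.Adj p q) :
    ∀ u ∈ T, ∀ v ∈ T, u ≠ v →
      ¬ (elemConn (G.deleteEdges {s(p, q)}) T u v + 1 = elemConn G T u v ∧
         elemConn (contractEdge G p q) T u v + 1 = elemConn G T u v) := by
  intro u hu v hv huv h
  obtain ⟨h1, h2⟩ := h
  have hpu : p ≠ u := fun h => hp (h ▸ hu)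
  have hpv : p ≠ v := fun h => hp (h ▸ hv)
  have hqu : q ≠ u := fun h => hq (h ▸ hu)
  have hqv : q ≠ v := fun h => hq (h ▸ hv)
  have hbdd : ∀ G' : SimpleGraph V, BddAbove {k | HasElemPaths G' T u v k} :=
    fun G' => bddAbove_hasElemPaths G' T u v huv
  have h0 : (0 : ℕ) ∈ {k | HasElemPaths G T u v k} := by
    simp only [Set.mem_setOf_eq]; exact hasElemPaths_zero G T u v
  have hmem : HasElemPaths G T u v (elemConn G T u v) :=
    Nat.sSup_mem ⟨0, h0⟩ (hbdd G)
  set k := elemConn G T u v with hk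
  obtain ⟨P, hP, hD⟩ := hmem
  have notUV : ∀ z : V, z ∉ T → z ∉ ({u, v} : Set V) ∪ T → True := fun _ _ _ => trivial
  by_cases hcase : ∃ i, s(p, q) ∈ (P i).edges
  · -- contraction keeps k element-disjoint paths
    obtain ⟨i₀, hi₀⟩ := hcase
    have hpsup : p ∈ (P i₀).support := Walk.fst_mem_support_of_mem_edges _ hi₀
    have hqsup : q ∈ (P i₀).support := Walk.snd_mem_support_of_mem_edges _ hi₀
    have hnotp : ∀ j, j ≠ i₀ → p ∉ (P j).support := by
      intro j hj hpj
      have := (hD i₀ j (Ne.symm hj)).2 p hpsup hpj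
      simp only [Set.mem_union, Set.mem_insert_iff, Set.mem_singleton_iff] at this
      rcases this with hT | hT | hT
      exacts [hp hT, hpu hT, hpv hT]
    have hnotq : ∀ j, j ≠ i₀ → q ∉ (P j).support := by
      intro j hj hqj
      have := (hD i₀ j (Ne.symm hj)).2 q hqsup hqj
      simp only [Set.mem_union, Set.mem_insert_iff, Set.mem_singleton_iff] at this
      rcases this with hT | hT | hT
      exacts [hq hT, hqu hT, hqv hT]
    have hfu : (if u = q then p else u) = u := if_neg (fun h => hqu h.symm)
    have hfv : (if v = q then p else v) = v := if_neg (fun h => hqv h.symm)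
    obtain ⟨W', hWsup, hWedg⟩ := exists_contract_walk G p q (P i₀)
    set W0 : (contractEdge G p q).Walk u v :=
      ((W'.toPath : (contractEdge G p q).Walk _ _).copy hfu hfv) with hW0
    have hW0path : W0.IsPath := by
      rw [hW0]
      exact (Walk.isPath_copy _ hfu hfv).mpr W'.toPath.2
    have hW0sup : ∀ x ∈ W0.support,
        ∃ y ∈ (P i₀).support, (if y = q then p else y) = x := by
      intro x hx
      rw [hW0, Walk.support_copy] at hx
      exact hWsup x (Walk.support_toPath_subset _ hx)
    have hW0edg : ∀ e ∈ W0.edges, ∃ x y, s(x, y) ∈ (P i₀).edges ∧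
        e = s(if x = q then p else x, if y = q then p else y) := by
      intro e he
      rw [hW0, Walk.edges_copy] at he
      exact hWedg e (Walk.edges_toPath_subset _ he)
    have htrans : ∀ j, j ≠ i₀ → ∀ e ∈ (P j).edges, e ∈ (contractEdge G p q).edgeSet := by
      intro j hj e
      refine Sym2.ind (fun x y he => ?_) e
      have hadj := Walk.adj_of_mem_edges _ he
      have hx : x ∈ (P j).support := Walk.fst_mem_support_of_mem_edges _ he
      have hy : y ∈ (P j).support := Walk.snd_mem_support_of_mem_edges _ he
      have hxq : x ≠ q := fun h => hnotq j hj (h ▸ hx)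
      have hyq : y ≠ q := fun h => hnotq j hj (h ▸ hy)
      rw [SimpleGraph.mem_edgeSet, contractEdge, SimpleGraph.fromRel_adj]
      exact ⟨hadj.ne, Or.inl ⟨x, y, hadj, if_neg hxq, if_neg hyq⟩⟩
    set Q : Fin k → (contractEdge G p q).Walk u v := fun j =>
      if hj : j = i₀ then W0 else (P j).transfer _ (htrans j hj) with hQ
    have hQi : Q i₀ = W0 := by rw [hQ]; simp
    have hQedges : ∀ j (hj : j ≠ i₀), (Q j).edges = (P j).edges := by
      intro j hj; rw [hQ]; simp only [dif_neg hj]; exact Walk.edges_transfer _ _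
    have hQsup : ∀ j (hj : j ≠ i₀), (Q j).support = (P j).support := by
      intro j hj; rw [hQ]; simp only [dif_neg hj]; exact Walk.support_transfer _ _
    have hcrossE : ∀ j, j ≠ i₀ → ∀ e, e ∈ W0.edges → e ∈ (P j).edges → False := by
      intro j hj e he hej
      obtain ⟨x, y, hxy, rfl⟩ := hW0edg e he
      have hxs := Walk.fst_mem_support_of_mem_edges _ hej
      have hys := Walk.snd_mem_support_of_mem_edges _ hej
      have hx : x ≠ q := by
        intro h; rw [h, if_pos rfl] at hxs; exact hnotp j hj hxs
      have hy : y ≠ q := by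
        intro h; rw [h, if_pos rfl] at hys; exact hnotp j hj hys
      rw [if_neg hx, if_neg hy] at hej
      exact (hD i₀ j (Ne.symm hj)).1 _ hxy hej
    have hcrossV : ∀ j, j ≠ i₀ → ∀ x, x ∈ W0.support → x ∈ (P j).support →
        x ∈ T ∪ {u, v} := by
      intro j hj x hx hxj
      obtain ⟨y, hy, hfy⟩ := hW0sup x hx
      by_cases hyq : y = q
      · rw [hyq, if_pos rfl] at hfy
        exact absurd (hfy ▸ hxj) (hnotp j hj)
      · rw [if_neg hyq] at hfy
        subst hfy
        exact (hD i₀ j (Ne.symm hj)).2 y hy hxj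
    have hgood : HasElemPaths (contractEdge G p q) T u v k := by
      refine ⟨Q, ?_, ?_⟩
      · intro j
        by_cases hj : j = i₀
        · subst hj; rw [hQi]; exact hW0path
        · rw [hQ]; simp only [dif_neg hj]; exact (hP j).transfer _
      · intro i j hij
        refine ⟨?_, ?_⟩
        · intro e hei hej
          by_cases hi : i = i₀
          · have hji : j ≠ i₀ := fun h => hij (hi.trans h.symm)
            rw [hi, hQi] at hei; rw [hQedges j hji] at hej
            exact hcrossE j hji e hei hej
          · by_cases hjj : j = i₀
            · rw [hjj, hQi] at hej; rw [hQedges i hi] at hei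
              exact hcrossE i hi e hej hei
            · rw [hQedges i hi] at hei; rw [hQedges j hjj] at hej
              exact (hD i j hij).1 e hei hej
        · intro x hxi hxj
          by_cases hi : i = i₀
          · have hji : j ≠ i₀ := fun h => hij (hi.trans h.symm)
            rw [hi, hQi] at hxi; rw [hQsup j hji] at hxj
            exact hcrossV j hji x hxi hxj
          · by_cases hjj : j = i₀
            · rw [hjj, hQi] at hxj; rw [hQsup i hi] at hxi
              exact hcrossV i hi x hxj hxi
            · rw [hQsup i hi] at hxi; rw [hQsup j hjj] at hxj
              exact (hD i j hij).2 x hxi hxj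
    have hle : k ≤ elemConn (contractEdge G p q) T u v :=
      le_csSup (hbdd (contractEdge G p q)) hgood
    omega
  · -- deletion keeps k element-disjoint paths
    push_neg at hcase
    have htrans : ∀ (i : Fin k), ∀ e ∈ (P i).edges,
        e ∈ (G.deleteEdges {s(p, q)}).edgeSet := by
      intro i e he
      rw [SimpleGraph.edgeSet_deleteEdges]
      exact ⟨Walk.edges_subset_edgeSet _ he, by
        simp only [Set.mem_singleton_iff]
        intro hrfl; exact hcase i (hrfl ▸ he)⟩
    have hgood : HasElemPaths (G.deleteEdges {s(p, q)}) T u v k := by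
      refine ⟨fun i => (P i).transfer _ (htrans i), fun i => (hP i).transfer _, ?_⟩
      intro i j hij
      refine ⟨?_, ?_⟩
      · intro e hei hej
        rw [Walk.edges_transfer] at hei hej
        exact (hD i j hij).1 e hei hej
      · intro x hxi hxj
        rw [Walk.support_transfer] at hxi hxj
        exact (hD i j hij).2 x hxi hxj
    have hle : k ≤ elemConn (G.deleteEdges {s(p, q)}) T u v :=
      le_csSup (hbdd (G.deleteEdges {s(p, q)})) hgood
    omega
end

section
/- Consider the single-sink k-vertex-connectivity problem on an undirected graph G=(V,E) with root r and terminals T. Let T' ⊆ T, let H' be a subgraph of G containing k internally vertex-disjoint paths from each terminal of T' to r, and let p₁,…,p_k be an augmentation for a terminal t ∈ T ∖ T' with respect to T'. Then the subgraph H' ∪ p₁ ∪ ⋯ ∪ p_k contains k internally vertex-disjoint paths from each terminal of T' ∪ {t} to r. -/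
open SimpleGraph

/-- `H` contains `k` internally vertex-disjoint `t`-`r` paths. -/
def HasFan {V : Type*} (H : SimpleGraph V) (t r : V) (k : ℕ) : Prop :=
  ∃ P : Fin k → H.Walk t r, (∀ i, (P i).IsPath) ∧
    ∀ i j, i ≠ j → ∀ x, x ∈ (P i).support → x ∈ (P j).support → x = t ∨ x = r

/-- The total cost of the edges of `H`. -/
noncomputable def cost {V : Type*} (c : Sym2 V → ℝ) (H : SimpleGraph V) : ℝ :=
  ∑ᶠ e ∈ H.edgeSet, c e

namespace MengerAux

open SimpleGraph Walk

variable {V : Type*}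

def Separates (G : SimpleGraph V) (A B S : Set V) : Prop :=
  ∀ ⦃a b : V⦄, a ∈ A → b ∈ B → ∀ w : G.Walk a b, ∃ v ∈ S, v ∈ w.support

def Links (G : SimpleGraph V) (A B : Set V) (k : ℕ) : Prop :=
  ∃ (a b : Fin k → V) (w : ∀ i, G.Walk (a i) (b i)),
    (∀ i, a i ∈ A) ∧ (∀ i, b i ∈ B) ∧
      ∀ i j, i ≠ j → ∀ x, x ∈ (w i).support → x ∉ (w j).support

lemma links_mono {G G' : SimpleGraph V} (h : G ≤ G') {A B : Set V} {k : ℕ}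
    (hl : Links G A B k) : Links G' A B k := by
  obtain ⟨a, b, w, ha, hb, hd⟩ := hl
  refine ⟨a, b, fun i => (w i).transfer G'
    (fun e he => (SimpleGraph.edgeSet_mono h) ((w i).edges_subset_edgeSet he)), ha, hb, ?_⟩
  intro i j hij x hx
  rw [Walk.support_transfer] at hx ⊢
  exact hd i j hij x hx

lemma exists_prefix {G : SimpleGraph V} {S : Set V} :
    ∀ {a b : V} (w : G.Walk a b), (∃ u ∈ w.support, u ∈ S) →
    ∃ (z : V) (p : G.Walk a z), z ∈ S ∧ (∀ x ∈ p.support, x ∈ w.support) ∧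
      (∀ e ∈ p.edges, e ∈ w.edges) ∧ ∀ u ∈ p.support, u ∈ S → u = z := by
  intro a b w
  induction w with
  | @nil a =>
    rintro ⟨u, hu, huS⟩
    simp only [Walk.support_nil, List.mem_singleton] at hu
    subst hu
    exact ⟨u, Walk.nil, huS, by simp, by simp, by simp⟩
  | @cons a c b h p ih =>
    intro hex
    by_cases ha : a ∈ S
    · refine ⟨a, Walk.nil, ha, by simp, by simp, ?_⟩
      intro u hu _
      simpa using hu
    · have hex' : ∃ u ∈ p.support, u ∈ S := by
        obtain ⟨u, hu, huS⟩ := hex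
        rw [Walk.support_cons, List.mem_cons] at hu
        rcases hu with rfl | hu
        · exact absurd huS ha
        · exact ⟨u, hu, huS⟩
      obtain ⟨z, q, hz, hsup, hedg, honly⟩ := ih hex'
      refine ⟨z, Walk.cons h q, hz, ?_, ?_, ?_⟩
      · intro x hx
        rw [Walk.support_cons, List.mem_cons] at hx ⊢
        rcases hx with rfl | hx
        · exact Or.inl rfl
        · exact Or.inr (hsup x hx)
      · intro e he
        rw [Walk.edges_cons, List.mem_cons] at he ⊢
        rcases he with rfl | he
        · exact Or.inl rfl
        · exact Or.inr (hedg e he)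
      · intro u hu huS
        rw [Walk.support_cons, List.mem_cons] at hu
        rcases hu with rfl | hu
        · exact absurd huS ha
        · exact honly u hu huS

lemma pathEndTake [DecidableEq V] {G : SimpleGraph V} {a c v : V} {p : G.Walk a c}
    (hp : p.IsPath) (hv : v ∈ p.support) (hc : c ∈ (p.takeUntil v hv).support) : v = c := by
  by_contra hne
  have hnd := hp.support_nodup
  rw [← p.take_spec hv, Walk.support_append] at hnd
  have hc' : c ∈ (p.dropUntil v hv).support.tail := by
    have hend := (p.dropUntil v hv).end_mem_support
    rw [Walk.support_eq_cons (p.dropUntil v hv)] at hend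
    rcases List.mem_cons.1 hend with h | h
    · exact absurd h.symm hne
    · exact h
  exact (List.disjoint_of_nodup_append hnd) hc hc'

lemma pathStartDrop [DecidableEq V] {G : SimpleGraph V} {c b v : V} {q : G.Walk c b}
    (hq : q.IsPath) (hv : v ∈ q.support) (hc : c ∈ (q.dropUntil v hv).support) : v = c := by
  by_contra hne
  have hnd := hq.support_nodup
  rw [← q.take_spec hv, Walk.support_append] at hnd
  have hc' : c ∈ (q.dropUntil v hv).support.tail := by
    rw [Walk.support_eq_cons (q.dropUntil v hv)] at hc
    rcases List.mem_cons.1 hc with h | h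
    · exact absurd h.symm hne
    · exact h
  exact (List.disjoint_of_nodup_append hnd) (q.takeUntil v hv).start_mem_support hc'


lemma glue [Fintype V] {G : SimpleGraph V} {A B S : Set V} {k : ℕ}
    (hS : Separates G A B S) (hcard : S.ncard = k)
    (hA : Links G A S k) (hB : Links G S B k) : Links G A B k := by
  classical
  obtain ⟨a, zp, wp, haA, hzpS, hdp⟩ := hA
  obtain ⟨zq, b, wq, hzqS, hbB, hdq⟩ := hB
  have hApaths : ∀ i : Fin k, ∃ (z : V) (p : G.Walk (a i) z), z ∈ S ∧ p.IsPath ∧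
      (∀ x ∈ p.support, x ∈ (wp i).support) ∧ (∀ u ∈ p.support, u ∈ S → u = z) := by
    intro i
    obtain ⟨z, p, hz, hsub, _, honly⟩ := exists_prefix (wp i)
      ⟨zp i, (wp i).end_mem_support, hzpS i⟩
    exact ⟨z, p.bypass, hz, p.bypass_isPath,
      fun x hx => hsub x (p.support_bypass_subset hx),
      fun u hu huS => honly u (p.support_bypass_subset hu) huS⟩
  choose z p hzS hp hpsub hponly using hApaths
  have hBpaths : ∀ j : Fin k, ∃ (y : V) (q : G.Walk y (b j)), y ∈ S ∧ q.IsPath ∧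
      (∀ x ∈ q.support, x ∈ (wq j).support) ∧ (∀ u ∈ q.support, u ∈ S → u = y) := by
    intro j
    obtain ⟨y, q, hy, hsub, _, honly⟩ := exists_prefix (wq j).reverse
      ⟨zq j, by rw [Walk.support_reverse, List.mem_reverse]; exact (wq j).start_mem_support,
        hzqS j⟩
    refine ⟨y, q.reverse.bypass, hy, Walk.bypass_isPath _, ?_, ?_⟩
    · intro x hx
      have hx' := q.reverse.support_bypass_subset hx
      rw [Walk.support_reverse, List.mem_reverse] at hx'
      have := hsub x hx'
      rwa [Walk.support_reverse, List.mem_reverse] at this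
    · intro u hu huS
      have hu' := q.reverse.support_bypass_subset hu
      rw [Walk.support_reverse, List.mem_reverse] at hu'
      exact honly u hu' huS
  choose y q hyS hq hqsub hqonly using hBpaths
  -- injectivity of endpoints
  have hzmem : ∀ i, z i ∈ (wp i).support := fun i => hpsub i _ (p i).end_mem_support
  have hymem : ∀ j, y j ∈ (wq j).support := fun j => hqsub j _ (q j).start_mem_support
  have hzinj : Function.Injective z := by
    intro i i' h
    by_contra hne
    exact hdp i i' hne (z i) (hzmem i) (by rw [h]; exact hzmem i')
  have hyinj : Function.Injective y := by
    intro j j' h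
    by_contra hne
    exact hdq j j' hne (y j) (hymem j) (by rw [h]; exact hymem j')
  haveI : Fintype S := (S.toFinite).fintype
  have hScard : Fintype.card S = k := by
    rw [Set.ncard_eq_toFinset_card'] at hcard
    rwa [Set.toFinset_card] at hcard
  have hfQ : Function.Bijective (fun j : Fin k => (⟨y j, hyS j⟩ : S)) := by
    rw [Fintype.bijective_iff_injective_and_card]
    exact ⟨fun j j' h => hyinj (congrArg Subtype.val h), by simp [hScard]⟩
  let eQ := Equiv.ofBijective _ hfQ
  let σ : Fin k → Fin k := fun i => eQ.symm ⟨z i, hzS i⟩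
  have hσ : ∀ i, y (σ i) = z i := by
    intro i
    have := eQ.apply_symm_apply ⟨z i, hzS i⟩
    exact congrArg Subtype.val this
  have hσinj : Function.Injective σ := by
    intro i i' h
    apply hzinj
    rw [← hσ i, ← hσ i', h]
  -- crossing lemma
  have cross : ∀ i j (v : V), v ∈ (p i).support → v ∈ (q j).support → v = z i ∧ v = y j := by
    intro i j v hvp hvq
    obtain ⟨u, huS, humem⟩ := hS (haA i) (hbB j)
      (((p i).takeUntil v hvp).append ((q j).dropUntil v hvq))
    rw [Walk.mem_support_append_iff] at humem
    rcases humem with h1 | h2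
    · have hu : u = z i := hponly i u (Walk.support_takeUntil_subset _ _ h1) huS
      have hvz : v = z i := pathEndTake (hp i) hvp (by rwa [hu] at h1)
      refine ⟨hvz, hqonly j v hvq ?_⟩
      rw [hvz]; exact hzS i
    · have hu : u = y j := hqonly j u (Walk.support_dropUntil_subset _ _ h2) huS
      have hvy : v = y j := pathStartDrop (hq j) hvq (by rwa [hu] at h2)
      refine ⟨hponly i v hvp ?_, hvy⟩
      rw [hvy]; exact hyS j
  -- final system
  refine ⟨a, fun i => b (σ i), fun i => (p i).append ((q (σ i)).copy (hσ i) rfl),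
    haA, fun i => hbB (σ i), ?_⟩
  intro i j hij x hx hx'
  rw [Walk.mem_support_append_iff, Walk.support_copy] at hx hx'
  have hpp : ∀ {i' j' : Fin k}, i' ≠ j' → x ∈ (p i').support → x ∈ (p j').support → False := by
    intro i' j' hne h1 h2
    exact hdp i' j' hne x (hpsub i' x h1) (hpsub j' x h2)
  have hpq : ∀ {i' j' : Fin k}, i' ≠ j' → x ∈ (p i').support → x ∈ (q (σ j')).support → False := by
    intro i' j' hne h1 h2
    obtain ⟨hz1, hy1⟩ := cross i' (σ j') x h1 h2
    rw [hσ j'] at hy1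
    exact hne (hzinj (hz1.symm.trans hy1))
  rcases hx with h1 | h1 <;> rcases hx' with h2 | h2
  · exact hpp hij h1 h2
  · exact hpq hij h1 h2
  · exact hpq (Ne.symm hij) h2 h1
  · exact hdq (σ i) (σ j) (fun h => hij (hσinj h)) x (hqsub _ x h1) (hqsub _ x h2)


variable [DecidableEq V]

variable [DecidableEq V]

/-- vertex identification map sending `y` to `x`. -/
def cmap (x y : V) : V → V := fun v => if v = y then x else v

/-- contraction of the edge `xy` (with `y` becoming isolated). -/
def contractG (G : SimpleGraph V) (x y : V) : SimpleGraph V :=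
  SimpleGraph.fromRel (fun u v => ∃ u' v', G.Adj u' v' ∧ cmap x y u' = u ∧ cmap x y v' = v)

lemma cmap_ne_y {x y : V} (hxy : x ≠ y) (v : V) : cmap x y v ≠ y := by
  unfold cmap
  split
  · exact hxy
  · assumption

lemma cmap_eq_cases {x y α u : V} (h : cmap x y α = u) : α = u ∨ (α = y ∧ u = x) := by
  unfold cmap at h
  split at h
  · right; exact ⟨by assumption, h.symm⟩
  · left; exact h

lemma contract_adj {G : SimpleGraph V} {x y u v : V} (h : (contractG G x y).Adj u v) :
    u ≠ v ∧ ∃ u' v', G.Adj u' v' ∧ cmap x y u' = u ∧ cmap x y v' = v := by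
  obtain ⟨hne, hrel | hrel⟩ := h
  · exact ⟨hne, hrel⟩
  · obtain ⟨u', v', ha, h1, h2⟩ := hrel
    exact ⟨hne, v', u', ha.symm, h2, h1⟩

lemma contract_adj_ne_y {G : SimpleGraph V} {x y u v : V} (hxy : x ≠ y)
    (h : (contractG G x y).Adj u v) : u ≠ y ∧ v ≠ y := by
  obtain ⟨-, u', v', -, h1, h2⟩ := contract_adj h
  exact ⟨h1 ▸ cmap_ne_y hxy u', h2 ▸ cmap_ne_y hxy v'⟩

lemma push_walk {G : SimpleGraph V} {x y : V} :
    ∀ {a b : V} (w : G.Walk a b), ∃ wc : (contractG G x y).Walk (cmap x y a) (cmap x y b),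
      ∀ ξ ∈ wc.support, ∃ u ∈ w.support, cmap x y u = ξ := by
  intro a b w
  induction w with
  | @nil a => exact ⟨Walk.nil, by simp⟩
  | @cons a c b h p ih =>
    obtain ⟨wc', hwc'⟩ := ih
    by_cases hρ : cmap x y a = cmap x y c
    · refine ⟨wc'.copy hρ.symm rfl, ?_⟩
      intro ξ hξ
      rw [Walk.support_copy] at hξ
      obtain ⟨u, hu, hρu⟩ := hwc' ξ hξ
      exact ⟨u, by simp [hu], hρu⟩
    · refine ⟨Walk.cons (show (contractG G x y).Adj _ _ from
          (SimpleGraph.fromRel_adj _ _ _).2 ⟨hρ, Or.inl ⟨a, c, h, rfl, rfl⟩⟩) wc', ?_⟩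
      intro ξ hξ
      rw [Walk.support_cons, List.mem_cons] at hξ
      rcases hξ with rfl | hξ
      · exact ⟨a, by simp, rfl⟩
      · obtain ⟨u, hu, hρu⟩ := hwc' ξ hξ
        exact ⟨u, by simp [hu], hρu⟩

lemma contract_edgeSet_sub {G : SimpleGraph V} {x y : V} (hadj : G.Adj x y) :
    (contractG G x y).edgeSet ⊆ Sym2.map (cmap x y) '' (G.edgeSet \ {s(x, y)}) := by
  intro e he
  induction e with
  | _ u v =>
    rw [SimpleGraph.mem_edgeSet] at he
    obtain ⟨hne, u', v', ha, h1, h2⟩ := contract_adj he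
    refine ⟨s(u', v'), ⟨(SimpleGraph.mem_edgeSet G).2 ha, ?_⟩, by simp [h1, h2]⟩
    simp only [Set.mem_singleton_iff, Sym2.eq_iff]
    rintro (⟨rfl, rfl⟩ | ⟨rfl, rfl⟩)
    · apply hne
      rw [← h1, ← h2]
      simp [cmap, hadj.ne]
    · apply hne
      rw [← h1, ← h2]
      simp [cmap, hadj.ne]

lemma lift_walk {G : SimpleGraph V} {x y : V} (hadj : G.Adj x y) :
    ∀ {u v : V} (wc : (contractG G x y).Walk u v), u ≠ y → v ≠ y →
      ∃ w : G.Walk u v, ∀ s ∈ w.support, cmap x y s ∈ wc.support := by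
  have hxy := hadj.ne
  intro u v wc
  induction wc with
  | @nil u =>
    intro hu _
    exact ⟨Walk.nil, by simp [cmap, hu]⟩
  | @cons u c v h p ih =>
    intro hu hv
    have hc : c ≠ y := (contract_adj_ne_y hxy h).2
    obtain ⟨w', hw'⟩ := ih hc hv
    obtain ⟨hne, u', v', ha, h1, h2⟩ := contract_adj h
    have hseg : ∃ seg : G.Walk u c, ∀ s ∈ seg.support, cmap x y s = u ∨ cmap x y s = c := by
      rcases cmap_eq_cases h1 with rfl | ⟨rfl, rfl⟩ <;> rcases cmap_eq_cases h2 with h2' | hyx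
      · subst h2'
        refine ⟨Walk.cons ha Walk.nil, ?_⟩
        intro s hs
        simp only [Walk.support_cons, Walk.support_nil, List.mem_cons,
          List.mem_singleton] at hs
        rcases hs with rfl | rfl | h
        · left; simp [cmap, hu]
        · right; simp [cmap, hc]
        · exact absurd h (by simp)
      · obtain ⟨rfl, rfl⟩ := hyx
        refine ⟨Walk.cons ha (Walk.cons hadj.symm Walk.nil), ?_⟩
        intro s hs
        simp only [Walk.support_cons, Walk.support_nil, List.mem_cons,
          List.mem_singleton] at hs
        rcases hs with rfl | rfl | rfl | h
        · left; simp [cmap, hu]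
        · right; simp [cmap]
        · right; simp [cmap, hadj.ne]
        · exact absurd h (by simp)
      · subst h2'
        refine ⟨Walk.cons hadj (Walk.cons ha Walk.nil), ?_⟩
        intro s hs
        simp only [Walk.support_cons, Walk.support_nil, List.mem_cons,
          List.mem_singleton] at hs
        rcases hs with rfl | rfl | rfl | h
        · left; simp [cmap, hadj.ne]
        · left; simp [cmap]
        · right; simp [cmap, hc]
        · exact absurd h (by simp)
      · obtain ⟨rfl, rfl⟩ := hyx
        exact absurd rfl hne
    obtain ⟨seg, hseg⟩ := hseg
    refine ⟨seg.append w', ?_⟩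
    intro s hs
    rw [Walk.mem_support_append_iff] at hs
    rw [Walk.support_cons, List.mem_cons]
    rcases hs with hs | hs
    · rcases hseg s hs with h' | h'
      · left; exact h'
      · right; rw [h']; exact p.start_mem_support
    · right
      exact hw' s hs

lemma lift_fix {G : SimpleGraph V} {x y : V} (hadj : G.Adj x y) {α β u v : V}
    (hρα : cmap x y α = u) (hρβ : cmap x y β = v)
    (wc : (contractG G x y).Walk u v) :
    ∃ w : G.Walk α β, ∀ s ∈ w.support, cmap x y s ∈ wc.support := by
  have hxy := hadj.ne
  have hu : u ≠ y := hρα ▸ cmap_ne_y hxy α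
  have hv : v ≠ y := hρβ ▸ cmap_ne_y hxy β
  obtain ⟨w₀, hw₀⟩ := lift_walk hadj wc hu hv
  have step1 : ∃ w₁ : G.Walk α v, ∀ s ∈ w₁.support, cmap x y s ∈ wc.support := by
    rcases cmap_eq_cases hρα with h | ⟨hαy, hux⟩
    · refine ⟨w₀.copy h.symm rfl, ?_⟩
      intro s hs
      rw [Walk.support_copy] at hs
      exact hw₀ s hs
    · refine ⟨Walk.cons (by rw [hαy, hux]; exact hadj.symm) w₀, ?_⟩
      intro s hs
      rw [Walk.support_cons, List.mem_cons] at hs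
      rcases hs with rfl | hs
      · rw [hρα]
        exact wc.start_mem_support
      · exact hw₀ s hs
  obtain ⟨w₁, hw₁⟩ := step1
  rcases cmap_eq_cases hρβ with h | ⟨hβy, hvx⟩
  · refine ⟨w₁.copy rfl h.symm, ?_⟩
    intro s hs
    rw [Walk.support_copy] at hs
    exact hw₁ s hs
  · refine ⟨w₁.append (Walk.cons (by rw [hβy, hvx]; exact hadj) Walk.nil), ?_⟩
    intro s hs
    rw [Walk.mem_support_append_iff] at hs
    rcases hs with hs | hs
    · exact hw₁ s hs
    · simp only [Walk.support_cons, Walk.support_nil, List.mem_cons, List.mem_singleton] at hs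
      rcases hs with rfl | rfl | h
      · have hcv : cmap x y s = s := by simp [cmap, hv]
        rw [hcv]
        exact wc.end_mem_support
      · rw [hρβ]
        exact wc.end_mem_support
      · exact absurd h (by simp)

lemma noEdgeCase [Fintype V] {G : SimpleGraph V} {A B : Set V} {k : ℕ}
    (hE : G.edgeSet = ∅) (hsep : ∀ S : Set V, Separates G A B S → k ≤ S.ncard) :
    Links G A B k := by
  classical
  have hnil : ∀ {a b : V}, G.Walk a b → a = b := by
    intro a b w
    cases w with
    | nil => rfl
    | cons h _ => exact absurd ((SimpleGraph.mem_edgeSet G).2 h) (by simp [hE])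
  have hsepAB : Separates G A B (A ∩ B) := by
    intro a b ha hb w
    have hab := hnil w
    exact ⟨a, ⟨ha, hab ▸ hb⟩, w.start_mem_support⟩
  have hk := hsep _ hsepAB
  rw [Set.ncard_eq_toFinset_card'] at hk
  obtain ⟨t, hts, htc⟩ := Finset.exists_subset_card_eq hk
  set f : Fin k → V := fun i => (t.equivFin.symm (Fin.cast htc.symm i) : V) with hf
  have hmem : ∀ i : Fin k, f i ∈ A ∩ B := by
    intro i
    have h1 := (t.equivFin.symm (Fin.cast htc.symm i)).2
    have h2 := hts h1
    simpa using h2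
  have hfinj : Function.Injective f := by
    intro i j h
    have h' := t.equivFin.symm.injective (Subtype.ext h)
    exact Fin.cast_injective _ h'
  refine ⟨f, f, fun _ => Walk.nil, fun i => (hmem i).1, fun i => (hmem i).2, ?_⟩
  intro i j hij xx hx hx'
  simp only [Walk.support_nil, List.mem_singleton] at hx hx'
  exact hij (hfinj (hx ▸ hx'.symm ▸ rfl))

theorem menger [Fintype V] (k : ℕ) :
    ∀ (n : ℕ) (G : SimpleGraph V) (A B : Set V), G.edgeSet.ncard ≤ n →
      (∀ S : Set V, Separates G A B S → k ≤ S.ncard) → Links G A B k := by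
  intro n
  induction n with
  | zero =>
    intro G A B hn hsep
    have hE : G.edgeSet = ∅ := by
      have h0 : G.edgeSet.ncard = 0 := Nat.le_zero.mp hn
      exact (Set.ncard_eq_zero (Set.toFinite _)).mp h0
    exact noEdgeCase hE hsep
  | succ n ih =>
    intro G A B hn hsep
    by_cases hE : G.edgeSet = ∅
    · exact noEdgeCase hE hsep
    · obtain ⟨e, he⟩ := Set.nonempty_iff_ne_empty.mpr hE
      revert he
      induction e using Sym2.ind with
      | _ x y =>
      intro he
      have hadj : G.Adj x y := (SimpleGraph.mem_edgeSet G).1 he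
      have hxy : x ≠ y := hadj.ne
      by_cases hc : ∀ Y : Set V,
          Separates (contractG G x y) (cmap x y '' A) (cmap x y '' B) Y → k ≤ Y.ncard
      · -- contraction case
        have hGcard : (contractG G x y).edgeSet.ncard ≤ n := by
          have h1 := Set.ncard_le_ncard (contract_edgeSet_sub hadj) (Set.toFinite _)
          have h2 : (Sym2.map (cmap x y) '' (G.edgeSet \ {s(x, y)})).ncard
              ≤ (G.edgeSet \ {s(x, y)}).ncard := Set.ncard_image_le (Set.toFinite _)
          have h3 : (G.edgeSet \ {s(x, y)}).ncard < G.edgeSet.ncard :=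
            Set.ncard_diff_singleton_lt_of_mem he (Set.toFinite _)
          omega
        obtain ⟨ac, bc, wc, hac, hbc, hd⟩ := ih (contractG G x y) _ _ hGcard hc
        have hlift : ∀ i, ∃ (α β : V) (w : G.Walk α β), α ∈ A ∧ β ∈ B ∧
            ∀ s ∈ w.support, cmap x y s ∈ (wc i).support := by
          intro i
          obtain ⟨α, hαA, hρα⟩ := hac i
          obtain ⟨β, hβB, hρβ⟩ := hbc i
          obtain ⟨w, hw⟩ := lift_fix hadj hρα hρβ (wc i)
          exact ⟨α, β, w, hαA, hβB, hw⟩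
        choose α β w hα hβ hw using hlift
        refine ⟨α, β, w, hα, hβ, ?_⟩
        intro i j hij s hs hs'
        exact hd i j hij (cmap x y s) (hw i s hs) (hw j s hs')
      · push_neg at hc
        obtain ⟨Y, hYsep, hYlt⟩ := hc
        have hS1 : Separates G A B (Y ∪ {y}) := by
          intro a b ha hb w
          obtain ⟨wcw, hwcw⟩ := push_walk (x := x) (y := y) w
          obtain ⟨ξ, hξY, hξmem⟩ := hYsep (Set.mem_image_of_mem _ ha)
            (Set.mem_image_of_mem _ hb) wcw
          obtain ⟨u, hu, hρu⟩ := hwcw ξ hξmem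
          by_cases huy : u = y
          · exact ⟨u, Or.inr (by simp [huy]), hu⟩
          · refine ⟨u, Or.inl ?_, hu⟩
            rwa [← hρu, show cmap x y u = u from by simp [cmap, huy]] at hξY
        have hxY : x ∈ Y := by
          by_contra hxY
          have hS0 : Separates G A B Y := by
            intro a b ha hb w
            obtain ⟨wcw, hwcw⟩ := push_walk (x := x) (y := y) w
            obtain ⟨ξ, hξY, hξmem⟩ := hYsep (Set.mem_image_of_mem _ ha)
              (Set.mem_image_of_mem _ hb) wcw
            obtain ⟨u, hu, hρu⟩ := hwcw ξ hξmem
            by_cases huy : u = y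
            · exfalso
              apply hxY
              rwa [← hρu, huy, show cmap x y y = x from by simp [cmap]] at hξY
            · refine ⟨u, ?_, hu⟩
              rwa [← hρu, show cmap x y u = u from by simp [cmap, huy]] at hξY
          have := hsep Y hS0
          omega
        have hyS : y ∈ Y ∪ {y} := Or.inr rfl
        have hxS : x ∈ Y ∪ {y} := Or.inl hxY
        have hcardS : (Y ∪ {y}).ncard = k := by
          have h1 := hsep _ hS1
          have h2 : (Y ∪ {y}).ncard ≤ Y.ncard + 1 := by
            have := Set.ncard_union_le Y ({y} : Set V)
            simpa [Set.ncard_singleton] using this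
          omega
        have hG'card : (G.deleteEdges {s(x, y)}).edgeSet.ncard ≤ n := by
          rw [SimpleGraph.edgeSet_deleteEdges]
          have h3 : (G.edgeSet \ {s(x, y)}).ncard < G.edgeSet.ncard :=
            Set.ncard_diff_singleton_lt_of_mem he (Set.toFinite _)
          omega
        have htransfer : ∀ {a z : V} (pp : G.Walk a z), s(x, y) ∉ pp.edges →
            ∃ pp' : (G.deleteEdges {s(x, y)}).Walk a z, pp'.support = pp.support := by
          intro a z pp hpe
          refine ⟨pp.transfer _ ?_, Walk.support_transfer _ _⟩
          intro e' he'
          rw [SimpleGraph.edgeSet_deleteEdges]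
          refine ⟨pp.edges_subset_edgeSet he', ?_⟩
          intro hmem
          rw [Set.mem_singleton_iff] at hmem
          exact hpe (hmem ▸ he')
        have hsepA : ∀ T : Set V, Separates (G.deleteEdges {s(x, y)}) A (Y ∪ {y}) T →
            k ≤ T.ncard := by
          intro T hT
          refine hsep T ?_
          intro a b ha hb w
          obtain ⟨v0, hv0S, hv0mem⟩ := hS1 ha hb w
          obtain ⟨zz, pp, hzzS, hsub, hedg, honly⟩ :=
            exists_prefix (S := Y ∪ {y}) w ⟨v0, hv0mem, hv0S⟩
          have hpe : s(x, y) ∉ pp.edges := by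
            intro hmem
            have hx1 := Walk.fst_mem_support_of_mem_edges pp hmem
            have hy1 := Walk.snd_mem_support_of_mem_edges pp hmem
            exact hxy ((honly x hx1 hxS).trans (honly y hy1 hyS).symm)
          obtain ⟨pp', hpp'⟩ := htransfer pp hpe
          obtain ⟨v', hv'T, hv'mem⟩ := hT ha hzzS pp'
          rw [hpp'] at hv'mem
          exact ⟨v', hv'T, hsub v' hv'mem⟩
        have hsepB : ∀ T : Set V, Separates (G.deleteEdges {s(x, y)}) (Y ∪ {y}) B T →
            k ≤ T.ncard := by
          intro T hT
          refine hsep T ?_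
          intro a b ha hb w
          obtain ⟨v0, hv0S, hv0mem⟩ := hS1 ha hb w
          obtain ⟨zz, pp, hzzS, hsub, hedg, honly⟩ := exists_prefix (S := Y ∪ {y}) w.reverse
            ⟨v0, by rwa [Walk.support_reverse, List.mem_reverse], hv0S⟩
          have hpe : s(x, y) ∉ pp.edges := by
            intro hmem
            have hx1 := Walk.fst_mem_support_of_mem_edges pp hmem
            have hy1 := Walk.snd_mem_support_of_mem_edges pp hmem
            exact hxy ((honly x hx1 hxS).trans (honly y hy1 hyS).symm)
          obtain ⟨pp', hpp'⟩ := htransfer pp hpe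
          obtain ⟨v', hv'T, hv'mem⟩ := hT hzzS hb pp'.reverse
          rw [Walk.support_reverse, List.mem_reverse, hpp'] at hv'mem
          have hmem2 := hsub v' hv'mem
          rw [Walk.support_reverse, List.mem_reverse] at hmem2
          exact ⟨v', hv'T, hmem2⟩
        have linkA := ih (G.deleteEdges {s(x, y)}) A (Y ∪ {y}) hG'card hsepA
        have linkB := ih (G.deleteEdges {s(x, y)}) (Y ∪ {y}) B hG'card hsepB
        exact glue hS1 hcardS (links_mono (G.deleteEdges_le _) linkA)
          (links_mono (G.deleteEdges_le _) linkB)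


/-- the graph `H` with all edges incident to `t` or `r` removed. -/
def avoidG (H : SimpleGraph V) (t r : V) : SimpleGraph V where
  Adj u v := H.Adj u v ∧ u ≠ t ∧ u ≠ r ∧ v ≠ t ∧ v ≠ r
  symm := ⟨by
    rintro u v ⟨h, h1, h2, h3, h4⟩
    exact ⟨h.symm, h3, h4, h1, h2⟩⟩
  loopless := ⟨fun v h => H.loopless.irrefl v h.1⟩

lemma avoidG_le (H : SimpleGraph V) (t r : V) : avoidG H t r ≤ H := fun _ _ h => h.1

lemma avoid_support {H : SimpleGraph V} {t r : V} :
    ∀ {a b : V} (w : (avoidG H t r).Walk a b), a ≠ t → a ≠ r →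
      ∀ v ∈ w.support, v ≠ t ∧ v ≠ r := by
  intro a b w
  induction w with
  | nil =>
    intro h1 h2 v hv
    simp only [Walk.support_nil, List.mem_singleton] at hv
    exact hv ▸ ⟨h1, h2⟩
  | cons h p ih =>
    intro h1 h2 v hv
    rw [Walk.support_cons, List.mem_cons] at hv
    rcases hv with rfl | hv
    · exact ⟨h1, h2⟩
    · exact ih h.2.2.2.1 h.2.2.2.2 v hv

variable [DecidableEq V]

lemma strip_head {H : SimpleGraph V} {t : V} :
    ∀ {b : V} (p : H.Walk t b), p.IsPath → t ≠ b →
      ∃ (a' : V) (q : H.Walk a' b), H.Adj t a' ∧ q.IsPath ∧ t ∉ q.support ∧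
        ∀ v ∈ q.support, v ∈ p.support := by
  intro b p hp hne
  cases p with
  | nil => exact absurd rfl hne
  | cons h q =>
    rw [Walk.cons_isPath_iff] at hp
    refine ⟨_, q, h, hp.1, hp.2, ?_⟩
    intro v hv
    rw [Walk.support_cons, List.mem_cons]
    exact Or.inr hv

lemma strip {H : SimpleGraph V} {t r : V} (hne : t ≠ r) (hadjtr : ¬H.Adj t r)
    (w : H.Walk t r) :
    ∃ (a' b' : V) (w₀ : (avoidG H t r).Walk a' b'), H.Adj t a' ∧ H.Adj r b' ∧
      ∀ v ∈ w₀.support, v ∈ w.support := by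
  obtain ⟨a', q, hta', hq, htq, hq_sub⟩ := strip_head w.bypass w.bypass_isPath hne
  have har : a' ≠ r := by
    rintro rfl
    exact hadjtr hta'
  obtain ⟨b', q2, hrb', _, hrq2, hq2_sub⟩ := strip_head q.reverse (hq.reverse) (Ne.symm har)
  have hq2_subq : ∀ v ∈ q2.support, v ∈ q.support := by
    intro v hv
    have := hq2_sub v hv
    rwa [Walk.support_reverse, List.mem_reverse] at this
  have htq2 : t ∉ q2.support := fun h => htq (hq2_subq t h)
  have hvq2 : ∀ v ∈ q2.support, v ≠ t ∧ v ≠ r := by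
    intro v hv
    exact ⟨fun h => htq2 (h ▸ hv), fun h => hrq2 (h ▸ hv)⟩
  have hedges : ∀ e ∈ q2.edges, e ∈ (avoidG H t r).edgeSet := by
    intro e he
    induction e using Sym2.ind with
    | _ c d =>
      rw [SimpleGraph.mem_edgeSet]
      have hc := hvq2 c (Walk.fst_mem_support_of_mem_edges q2 he)
      have hd := hvq2 d (Walk.snd_mem_support_of_mem_edges q2 he)
      exact ⟨q2.adj_of_mem_edges he, hc.1, hc.2, hd.1, hd.2⟩
  refine ⟨a', b', (q2.transfer _ hedges).reverse, hta', hrb', ?_⟩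
  intro v hv
  rw [Walk.support_reverse, List.mem_reverse, Walk.support_transfer] at hv
  exact w.support_bypass_subset (hq_sub v (hq2_subq v hv))


end MengerAux

open MengerAux

/-- **Augmentation proposition.** If `H'` contains `k` internally vertex-disjoint paths
from each terminal of `T'` to the root `r`, and `p₁, …, p_k` is an augmentation for
`t ∈ T \ T'` with respect to `T'`, then `H'` together with the paths contains `k`
internally vertex-disjoint paths from each terminal of `T' ∪ {t}` to `r`. -/
theorem augmentation_feasible {V : Type*} [Fintype V]
    (G : SimpleGraph V) (r : V) (T T' : Set V) (hT' : T' ⊆ T) (k : ℕ)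
    (H' : SimpleGraph V) (hH'le : H' ≤ G)
    (hH' : ∀ s ∈ T', HasFan H' s r k)
    (t : V) (ht : t ∈ T) (htn : t ∉ T')
    (e : Fin k → V) (he : ∀ i, e i ∈ T' ∪ {r})
    (P : ∀ i, G.Walk t (e i)) (hP : ∀ i, (P i).IsPath)
    (hdisj : ∀ i j, i ≠ j → ∀ x, x ∈ (P i).support → x ∈ (P j).support →
      x = t ∨ (x = e i ∧ x = e j))
    (hend : ∀ t' ∈ T', ({i | e i = t'} : Set (Fin k)).Subsingleton) :
    ∀ s ∈ T' ∪ {t},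
      HasFan (H' ⊔ ⨆ i, ((P i).toSubgraph).spanningCoe) s r k := by
  classical
  intro s hs
  set H := H' ⊔ ⨆ i, ((P i).toSubgraph).spanningCoe with hHdef
  have hH'H : H' ≤ H := le_sup_left
  have hPH : ∀ i, ∀ e' ∈ (P i).edges, e' ∈ H.edgeSet := by
    intro i e' he'
    have h2 : ((P i).toSubgraph.spanningCoe : SimpleGraph V) ≤ H :=
      le_trans (le_iSup (fun i => ((P i).toSubgraph).spanningCoe) i) le_sup_right
    apply SimpleGraph.edgeSet_mono h2
    induction e' using Sym2.ind with
    | _ c d =>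
      rw [SimpleGraph.mem_edgeSet]
      exact SimpleGraph.Subgraph.mem_edgeSet.1 (((P i).mem_edges_toSubgraph).2 he')
  rcases hs with hsT' | hst
  · -- s is an old terminal: reuse its fan
    obtain ⟨F, hFp, hFd⟩ := hH' s hsT'
    refine ⟨fun i => (F i).transfer H
      (fun e' he' => SimpleGraph.edgeSet_mono hH'H ((F i).edges_subset_edgeSet he')), ?_, ?_⟩
    · intro i
      exact (hFp i).transfer _
    · intro i j hij x hx hx'
      rw [Walk.support_transfer] at hx hx'
      exact hFd i j hij x hx hx'
  · -- s = t
    rw [Set.mem_singleton_iff] at hst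
    subst hst
    by_cases htr : s = r
    · subst htr
      refine ⟨fun _ => Walk.nil, fun _ => Walk.IsPath.nil, ?_⟩
      intro i j hij x hx hx'
      simp only [Walk.support_nil, List.mem_singleton] at hx
      exact Or.inl hx
    by_cases hadjtr : H.Adj s r
    · refine ⟨fun _ => Walk.cons hadjtr Walk.nil, ?_, ?_⟩
      · intro i
        rw [Walk.cons_isPath_iff]
        refine ⟨Walk.IsPath.nil, ?_⟩
        simp [htr]
      · intro i j hij x hx hx'
        simp only [Walk.support_cons, Walk.support_nil, List.mem_cons,
          List.mem_singleton] at hx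
        rcases hx with rfl | rfl | hfalse
        · exact Or.inl rfl
        · exact Or.inr rfl
        · exact absurd hfalse (by simp)
    -- main case
    set A : Set V := {v | H.Adj s v} with hAdef
    set B : Set V := {v | H.Adj r v} with hBdef
    have hsepmain : ∀ S : Set V, Separates (avoidG H s r) A B S → k ≤ S.ncard := by
      intro S hsep
      have hCsub : (S \ {s, r} : Set V) ⊆ S := Set.diff_subset
      have hq : k ≤ (S \ {s, r} : Set V).ncard → k ≤ S.ncard :=
        fun h => le_trans h (Set.ncard_le_ncard hCsub (Set.toFinite _))
      apply hq
      set C : Set V := S \ {s, r} with hCdef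
      have hsepC : Separates (avoidG H s r) A B C := by
        intro a b ha hb wab
        obtain ⟨v, hvS, hvmem⟩ := hsep ha hb wab
        have hat : a ≠ s := by
          rintro rfl
          exact H.loopless.irrefl a ha
        have har : a ≠ r := by
          rintro rfl
          exact hadjtr ha
        have hvtr := avoid_support wab hat har v hvmem
        exact ⟨v, ⟨hvS, by simp [hvtr.1, hvtr.2]⟩, hvmem⟩
      by_contra hlt
      push_neg at hlt
      have htC : s ∉ C := fun h => h.2 (by simp)
      have hrC : r ∉ C := fun h => h.2 (by simp)
      -- an index whose path avoids C
      have huntouched : ∃ i₀ : Fin k, ∀ c ∈ C, c ∉ (P i₀).support := by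
        by_contra hall
        push_neg at hall
        choose c hcC hcP using hall
        have hcinj : Function.Injective c := by
          intro i j hij
          by_contra hne
          rcases hdisj i j hne (c i) (hcP i) (hij ▸ hcP j) with h | ⟨h1, h2⟩
          · exact htC (h ▸ hcC i)
          · rcases he i with hT'i | hri
            · have hji : e j = e i := (h1.symm.trans h2).symm
              exact hne (hend (e i) hT'i (Set.mem_setOf.2 rfl) (Set.mem_setOf.2 hji))
            · rw [Set.mem_singleton_iff] at hri
              exact hrC (by rw [← hri, ← h1]; exact hcC i)
        have hcount : k ≤ C.ncard := by
          calc k = (Finset.univ : Finset (Fin k)).card := by simp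
          _ ≤ C.toFinset.card := Finset.card_le_card_of_injOn c
              (fun i _ => Set.mem_toFinset.2 (hcC i)) (fun i _ j _ h => hcinj h)
          _ = C.ncard := (Set.ncard_eq_toFinset_card' C).symm
        omega
      obtain ⟨i₀, hi₀⟩ := huntouched
      -- build a walk from s to r in H avoiding C
      have hbig : ∃ W : H.Walk s r, ∀ c ∈ C, c ∉ W.support := by
        rcases he i₀ with hT'i | hri
        · obtain ⟨Q, hQp, hQd⟩ := hH' (e i₀) hT'i
          have hznC : e i₀ ∉ C := fun h => hi₀ _ h (P i₀).end_mem_support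
          have hfan : ∃ a0 : Fin k, ∀ c ∈ C, c ∉ (Q a0).support := by
            by_contra hall
            push_neg at hall
            choose c2 hc2C hc2Q using hall
            have hc2inj : Function.Injective c2 := by
              intro i j hij
              by_contra hne
              rcases hQd i j hne (c2 i) (hc2Q i) (hij ▸ hc2Q j) with h | h
              · exact hznC (h ▸ hc2C i)
              · exact hrC (h ▸ hc2C i)
            have hcount : k ≤ C.ncard := by
              calc k = (Finset.univ : Finset (Fin k)).card := by simp
              _ ≤ C.toFinset.card := Finset.card_le_card_of_injOn c2
                  (fun i _ => Set.mem_toFinset.2 (hc2C i)) (fun i _ j _ h => hc2inj h)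
              _ = C.ncard := (Set.ncard_eq_toFinset_card' C).symm
            omega
          obtain ⟨a0, ha0⟩ := hfan
          refine ⟨((P i₀).transfer H (hPH i₀)).append ((Q a0).transfer H
            (fun e' he' => SimpleGraph.edgeSet_mono hH'H ((Q a0).edges_subset_edgeSet he'))),
            ?_⟩
          intro cc hcc hmem
          rw [Walk.mem_support_append_iff, Walk.support_transfer, Walk.support_transfer] at hmem
          rcases hmem with hmem | hmem
          · exact hi₀ cc hcc hmem
          · exact ha0 cc hcc hmem
        · rw [Set.mem_singleton_iff] at hri
          refine ⟨((P i₀).transfer H (hPH i₀)).copy rfl hri, ?_⟩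
          intro cc hcc hmem
          rw [Walk.support_copy, Walk.support_transfer] at hmem
          exact hi₀ cc hcc hmem
      obtain ⟨W, hW⟩ := hbig
      obtain ⟨a', b', w₀, hta', hrb', hsub⟩ := strip htr hadjtr W
      obtain ⟨v, hvC, hvmem⟩ := hsepC hta' hrb' w₀
      exact hW v hvC (hsub v hvmem)
    obtain ⟨a, b, w, ha, hb, hd⟩ := menger k ((avoidG H s r).edgeSet.ncard)
      (avoidG H s r) A B le_rfl hsepmain
    -- assemble the fan at s
    have hmidH : ∀ i, ∀ e' ∈ (w i).edges, e' ∈ H.edgeSet := fun i e' he' =>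
      SimpleGraph.edgeSet_mono (avoidG_le H s r) ((w i).edges_subset_edgeSet he')
    set F : Fin k → H.Walk s r := fun i =>
      (Walk.cons (ha i : H.Adj s (a i)) ((w i).transfer H (hmidH i))).append
        (Walk.cons ((hb i : H.Adj r (b i)).symm) Walk.nil) with hFdef
    have hsupF : ∀ i x, x ∈ (F i).support → x = s ∨ x = r ∨ x ∈ (w i).support := by
      intro i x hx
      rw [hFdef] at hx
      simp only at hx
      rw [Walk.mem_support_append_iff] at hx
      rcases hx with hx | hx
      · rw [Walk.support_cons, List.mem_cons, Walk.support_transfer] at hx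
        rcases hx with rfl | hx
        · exact Or.inl rfl
        · exact Or.inr (Or.inr hx)
      · simp only [Walk.support_cons, Walk.support_nil, List.mem_cons,
          List.mem_singleton] at hx
        rcases hx with rfl | rfl | hfalse
        · exact Or.inr (Or.inr ((w i).end_mem_support))
        · exact Or.inr (Or.inl rfl)
        · exact absurd hfalse (by simp)
    refine ⟨fun i => (F i).bypass, fun i => Walk.bypass_isPath _, ?_⟩
    intro i j hij x hx hx'
    have h1 := hsupF i x ((F i).support_bypass_subset hx)
    have h2 := hsupF j x ((F j).support_bypass_subset hx')
    rcases h1 with rfl | rfl | h1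
    · exact Or.inl rfl
    · exact Or.inr rfl
    · rcases h2 with rfl | rfl | h2
      · exact Or.inl rfl
      · exact Or.inr rfl
      · exact absurd h2 (hd i j hij x h1)
end
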